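/- Let N ≥ 2 and let ψ_1, …, ψ_N be unit vectors in ℂ^d with c := max_{i≠j} |⟨ψ_i, ψ_j⟩| satisfying 0 < c < 1. Let δ ∈ (0,1) and let k ∈ ℕ satisfy k ≥ log((N−1)/δ) / (−log c). Then the N×N matrix G⁽ᵏ⁾ with entries G⁽ᵏ⁾_{ij} := ⟨ψ_i, ψ_j⟩^k is Hermitian, every eigenvalue λ of G⁽ᵏ⁾ satisfies 1 − δ ≤ λ ≤ 1 + δ, and in particular G⁽ᵏ⁾ is positive definite. -/

import Mathlib

open Matrix
open scoped ComplexOrder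

theorem stmt_8 {d N : ℕ} (hN : 2 ≤ N) (ψ : Fin N → (Fin d → ℂ))
    (hψ : ∀ i, star (ψ i) ⬝ᵥ ψ i = 1)
    (c : ℝ)
    (hc : c = ⨆ p : {p : Fin N × Fin N // p.1 ≠ p.2}, ‖star (ψ p.1.1) ⬝ᵥ ψ p.1.2‖)
    (hc0 : 0 < c) (hc1 : c < 1)
    (δ : ℝ) (hδ : δ ∈ Set.Ioo (0 : ℝ) 1)
    (k : ℕ) (hk : Real.log (((N : ℝ) - 1) / δ) / (-Real.log c) ≤ (k : ℝ))
    (Gk : Matrix (Fin N) (Fin N) ℂ)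
    (hGk : ∀ i j, Gk i j = (star (ψ i) ⬝ᵥ ψ j) ^ k) :
    ∃ hH : Gk.IsHermitian,
      (∀ i, 1 - δ ≤ hH.eigenvalues i ∧ hH.eigenvalues i ≤ 1 + δ) ∧ Gk.PosDef := by
  classical
  obtain ⟨hδ0, hδ1⟩ := hδ
  have hN1 : (0:ℝ) < (N:ℝ) - 1 := by
    have : (2:ℝ) ≤ (N:ℝ) := by exact_mod_cast hN
    linarith
  have hH : Gk.IsHermitian := by
    ext i j
    simp only [conjTranspose_apply, hGk, ← star_pow]
    congr 1
    simp [dotProduct, star_sum, mul_comm]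
  have hcle : ∀ i j, i ≠ j → ‖star (ψ i) ⬝ᵥ ψ j‖ ≤ c := by
    intro i j hij
    rw [hc]
    exact le_ciSup (f := fun p : {p : Fin N × Fin N // p.1 ≠ p.2} => ‖star (ψ p.1.1) ⬝ᵥ ψ p.1.2‖) (Set.Finite.bddAbove (Set.finite_range _)) ⟨(i, j), hij⟩
  have hck : c ^ k ≤ δ / ((N:ℝ) - 1) := by
    have hlogc : Real.log c < 0 := Real.log_neg hc0 hc1
    have h1 : Real.log (((N:ℝ) - 1) / δ) ≤ (k:ℝ) * (-Real.log c) := by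
      rw [div_le_iff₀ (by linarith)] at hk
      linarith
    have h2 : (k:ℝ) * Real.log c ≤ Real.log (δ / ((N:ℝ) - 1)) := by
      rw [Real.log_div hN1.ne' hδ0.ne'] at h1
      rw [Real.log_div hδ0.ne' hN1.ne']
      linarith
    calc c ^ k = Real.exp ((k:ℝ) * Real.log c) := by
          rw [← Real.log_pow, Real.exp_log (pow_pos hc0 k)]
      _ ≤ Real.exp (Real.log (δ / ((N:ℝ) - 1))) := Real.exp_le_exp.mpr h2
      _ = δ / ((N:ℝ) - 1) := Real.exp_log (div_pos hδ0 hN1)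
  have key : ∀ i, |hH.eigenvalues i - 1| ≤ δ := by
    intro i
    have hv := hH.mulVec_eigenvectorBasis i
    have hvne : ⇑(hH.eigenvectorBasis i) ≠ 0 := by
      have := hH.eigenvectorBasis.orthonormal.ne_zero i
      intro h
      apply this
      ext x
      exact congrFun h x
    have heig : Module.End.HasEigenvalue (Matrix.toLin' Gk) ((hH.eigenvalues i : ℂ)) := by
      apply Module.End.hasEigenvalue_of_hasEigenvector
      refine ⟨Module.End.mem_eigenspace_iff.mpr ?_, hvne⟩
      rw [Matrix.toLin'_apply, hv]
      ext x
      simp [Complex.real_smul]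
    obtain ⟨k0, hk0⟩ := eigenvalue_mem_ball heig
    rw [Metric.mem_closedBall] at hk0
    have hdiag : Gk k0 k0 = 1 := by rw [hGk, hψ, one_pow]
    have hsum : ∑ j ∈ Finset.univ.erase k0, ‖Gk k0 j‖ ≤ δ := by
      calc ∑ j ∈ Finset.univ.erase k0, ‖Gk k0 j‖
          ≤ ∑ _j ∈ Finset.univ.erase k0, c ^ k := by
            refine Finset.sum_le_sum fun j hj => ?_
            rw [hGk, norm_pow]
            exact pow_le_pow_left₀ (norm_nonneg _) (hcle _ _ (Finset.ne_of_mem_erase hj).symm) k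
        _ = ((N:ℝ) - 1) * c ^ k := by
            rw [Finset.sum_const, Finset.card_erase_of_mem (Finset.mem_univ _)]
            simp only [Finset.card_univ, Fintype.card_fin, nsmul_eq_mul]
            congr 1
            have : 1 ≤ N := by omega
            push_cast [this]
            ring
        _ ≤ ((N:ℝ) - 1) * (δ / ((N:ℝ) - 1)) := by
            exact mul_le_mul_of_nonneg_left hck hN1.le
        _ = δ := by field_simp
    have hnb : ‖((hH.eigenvalues i : ℝ) : ℂ) - 1‖ ≤ δ := by
      rw [hdiag] at hk0
      calc ‖((hH.eigenvalues i : ℝ) : ℂ) - 1‖ = dist ((hH.eigenvalues i : ℝ) : ℂ) 1 := by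
            rw [dist_eq_norm]
        _ ≤ _ := hk0.trans hsum
    rw [show ((hH.eigenvalues i : ℝ) : ℂ) - 1 = ((hH.eigenvalues i - 1 : ℝ) : ℂ) by push_cast; ring]
      at hnb
    rwa [Complex.norm_real, Real.norm_eq_abs] at hnb
  have hbounds : ∀ i, 1 - δ ≤ hH.eigenvalues i ∧ hH.eigenvalues i ≤ 1 + δ := by
    intro i
    obtain ⟨h1, h2⟩ := abs_le.mp (key i)
    constructor <;> linarith
  have hpos : ∀ i, 0 < hH.eigenvalues i := fun i => by
    have := (hbounds i).1; linarith
  have hpsd : Gk.PosSemidef := hH.posSemidef_iff_eigenvalues_nonneg.mpr fun i => (hpos i).le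
  have hdet : Gk.det ≠ 0 := by
    rw [hH.det_eq_prod_eigenvalues]
    refine Finset.prod_ne_zero_iff.mpr fun i _ => ?_
    exact Complex.ofReal_ne_zero.mpr (hpos i).ne'
  refine ⟨hH, hbounds, posDef_iff_dotProduct_mulVec.mpr ⟨hH, fun x hx => ?_⟩⟩
  refine lt_of_le_of_ne (hpsd.dotProduct_mulVec_nonneg x) ?_
  intro heq
  have h0 : Gk *ᵥ x = 0 := (hpsd.dotProduct_mulVec_zero_iff x).mp heq.symm
  have hinj : Function.Injective Gk.mulVec :=
    mulVec_injective_iff_isUnit.mpr ((isUnit_iff_isUnit_det _).mpr hdet.isUnit)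
  exact hx (hinj (by simpa using h0))
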